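/- arXiv:1702.02131 — 3 statements merged into one kernel-verified Lean document; each statement's English description precedes it below -/
import Mathlib

section
/- If A is a nonsingular 3×3 real matrix with ‖A‖² = 3 and det A = 0 is false, and B is a matrix on the sphere ‖B‖² = 3 of rank 1 that minimizes ‖A - B‖ among singular matrices on this sphere, then a contradiction arises; i.e., the closest singular matrix on the sphere {‖M‖² = 3, det M = 0} to a nonsingular matrix A on the sphere has rank exactly 2. -/
open Matrix

/-- The squared Frobenius norm of a matrix. -/
def frobSq {m n : Type*} [Fintype m] [Fintype n] (A : Matrix m n ℝ) : ℝ :=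
  ∑ i, ∑ j, (A i j) ^ 2

/-- In `ℝ³` there is a nonzero vector "orthogonal" to two given vectors. -/
lemma exists_orth (v y : Fin 3 → ℝ) :
    ∃ z : Fin 3 → ℝ, z ≠ 0 ∧
      (v 0 * z 0 + v 1 * z 1 + v 2 * z 2 = 0) ∧
      (y 0 * z 0 + y 1 * z 1 + y 2 * z 2 = 0) := by
  set C : Matrix (Fin 2) (Fin 3) ℝ := Matrix.of ![v, y] with hC
  have hni : ¬ Function.Injective C.mulVecLin := by
    intro hinj
    have := LinearMap.finrank_le_finrank_of_injective hinj
    simp [Module.finrank_pi] at this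
  obtain ⟨a, b, hab, hne⟩ := Function.not_injective_iff.mp hni
  have key : ∀ i : Fin 2, C i 0 * (a 0 - b 0) + C i 1 * (a 1 - b 1) + C i 2 * (a 2 - b 2) = 0 := by
    intro i
    have h := congrFun (by rw [map_sub, hab, sub_self] : C.mulVecLin (a - b) = 0) i
    simp only [Matrix.mulVecLin_apply, Matrix.mulVec, dotProduct, Fin.sum_univ_three,
      Pi.zero_apply, Pi.sub_apply] at h
    linear_combination h
  refine ⟨a - b, sub_ne_zero.mpr hne, ?_, ?_⟩
  · have h := key 0
    simp only [hC, Matrix.of_apply, Matrix.cons_val_zero] at h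
    simp only [Pi.sub_apply]
    linear_combination h
  · have h := key 1
    simp only [hC, Matrix.of_apply, Matrix.cons_val_one, Matrix.head_cons, Matrix.cons_val_zero] at h
    simp only [Pi.sub_apply]
    linear_combination h

lemma frob_sub_expand (X Y : Matrix (Fin 3) (Fin 3) ℝ) :
    frobSq (X - Y) = frobSq X + frobSq Y - 2 * (∑ i, ∑ j, X i j * Y i j) := by
  simp only [frobSq, Matrix.sub_apply, Fin.sum_univ_three]
  ring

set_option maxHeartbeats 1000000 in
/-- If A is a nonsingular 3×3 real matrix with ‖A‖² = 3 (Frobenius), and B is a singular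
matrix on the sphere ‖B‖² = 3 minimizing the Frobenius distance to A among all singular
matrices on that sphere, then B has rank exactly 2. -/
theorem nearest_singular_has_rank_two (A B : Matrix (Fin 3) (Fin 3) ℝ)
    (hA : frobSq A = 3) (hAdet : A.det ≠ 0)
    (hB : frobSq B = 3) (hBdet : B.det = 0)
    (hmin : ∀ M : Matrix (Fin 3) (Fin 3) ℝ, frobSq M = 3 → M.det = 0 →
      frobSq (A - B) ≤ frobSq (A - M)) :
    B.rank = 2 := by
  have hle : B.rank ≤ 2 := by
    obtain ⟨z, hz0, hz⟩ := Matrix.exists_mulVec_eq_zero_iff.mpr hBdet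
    have hrn := LinearMap.finrank_range_add_finrank_ker B.mulVecLin
    have hker : 0 < Module.finrank ℝ (LinearMap.ker B.mulVecLin) := by
      rw [Module.finrank_pos_iff_exists_ne_zero]
      refine ⟨⟨z, by simpa [Matrix.mulVecLin_apply] using hz⟩, ?_⟩
      simp [Submodule.mk_eq_zero, hz0]
    simp only [Module.finrank_pi, Fintype.card_fin] at hrn
    rw [Matrix.rank]
    omega
  have hne0 : B.rank ≠ 0 := by
    intro h0
    rw [Matrix.rank, Submodule.finrank_eq_zero, LinearMap.range_eq_bot] at h0
    have hB0 : B = 0 := by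
      ext i j
      have := congrFun (congrArg (fun f => f (Pi.single j 1)) h0) i
      simpa [Matrix.mulVecLin_apply, Matrix.mulVec_single] using this
    rw [hB0] at hB
    simp [frobSq] at hB
  have hne1 : B.rank ≠ 1 := by
    intro h1
    rw [Matrix.rank] at h1
    obtain ⟨u, hu0, hu⟩ := finrank_eq_one_iff'.mp h1
    have hcolmem : ∀ j, (fun i => B i j) ∈ LinearMap.range B.mulVecLin := by
      intro j
      exact ⟨Pi.single j 1, by ext i; simp [Matrix.mulVecLin_apply, Matrix.mulVec_single]⟩
    choose v hv using fun j => hu ⟨_, hcolmem j⟩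
    set u' : Fin 3 → ℝ := (u : Fin 3 → ℝ) with hu'
    have hBij : ∀ i j, B i j = v j * u' i := by
      intro i j
      have := congrFun (congrArg (Subtype.val) (hv j)) i
      simpa using this.symm
    obtain ⟨y, hy0, hyv, -⟩ := exists_orth v v
    set w : Fin 3 → ℝ := A *ᵥ y with hwdef
    have hw : ∀ i, w i = A i 0 * y 0 + A i 1 * y 1 + A i 2 * y 2 := by
      intro i
      simp [hwdef, Matrix.mulVec, dotProduct, Fin.sum_univ_three]
    have hw0 : w ≠ 0 := by
      intro h
      exact hAdet (Matrix.exists_mulVec_eq_zero_iff.mp ⟨y, hy0, h⟩)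
    set d : ℝ := w 0 ^ 2 + w 1 ^ 2 + w 2 ^ 2 with hd
    set ny : ℝ := y 0 ^ 2 + y 1 ^ 2 + y 2 ^ 2 with hny
    have hdpos : 0 < d := by
      refine lt_of_le_of_ne (by rw [hd]; positivity) (Ne.symm ?_)
      intro h
      apply hw0
      have q0 : w 0 ^ 2 = 0 := by
        linarith [sq_nonneg (w 0), sq_nonneg (w 1), sq_nonneg (w 2)]
      have q1 : w 1 ^ 2 = 0 := by
        linarith [sq_nonneg (w 0), sq_nonneg (w 1), sq_nonneg (w 2)]
      have q2 : w 2 ^ 2 = 0 := by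
        linarith [sq_nonneg (w 0), sq_nonneg (w 1), sq_nonneg (w 2)]
      funext i
      fin_cases i
      · exact pow_eq_zero_iff two_ne_zero |>.mp q0
      · exact pow_eq_zero_iff two_ne_zero |>.mp q1
      · exact pow_eq_zero_iff two_ne_zero |>.mp q2
    have hnypos : 0 < ny := by
      refine lt_of_le_of_ne (by rw [hny]; positivity) (Ne.symm ?_)
      intro h
      apply hy0
      have q0 : y 0 ^ 2 = 0 := by
        linarith [sq_nonneg (y 0), sq_nonneg (y 1), sq_nonneg (y 2)]
      have q1 : y 1 ^ 2 = 0 := by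
        linarith [sq_nonneg (y 0), sq_nonneg (y 1), sq_nonneg (y 2)]
      have q2 : y 2 ^ 2 = 0 := by
        linarith [sq_nonneg (y 0), sq_nonneg (y 1), sq_nonneg (y 2)]
      funext i
      fin_cases i
      · exact pow_eq_zero_iff two_ne_zero |>.mp q0
      · exact pow_eq_zero_iff two_ne_zero |>.mp q1
      · exact pow_eq_zero_iff two_ne_zero |>.mp q2
    set p : ℝ := d * ny with hp
    have hppos : 0 < p := mul_pos hdpos hnypos
    set b : ℝ := ∑ i, ∑ j, A i j * B i j with hb
    set s : ℝ := Real.sqrt (b ^ 2 * p + 3 * d ^ 2) with hs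
    have hs2 : s ^ 2 = b ^ 2 * p + 3 * d ^ 2 := by
      rw [hs, Real.sq_sqrt]; positivity
    have hspos : 0 < s := by
      rw [hs]; apply Real.sqrt_pos.mpr; positivity
    set sp : ℝ := Real.sqrt p with hsp
    have hsp2 : sp ^ 2 = p := by rw [hsp, Real.sq_sqrt hppos.le]
    have hsppos : 0 < sp := Real.sqrt_pos.mpr hppos
    set α : ℝ := b * sp / s with hα
    set β : ℝ := 3 * d / (sp * s) with hβ
    set M : Matrix (Fin 3) (Fin 3) ℝ :=
      Matrix.of (fun i j => α * B i j + β * (w i * y j)) with hM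
    clear_value u' w d ny p b s sp α β M
    have hM3 : frobSq M = 3 := by
      have e : frobSq M = α ^ 2 * frobSq B + β ^ 2 * p +
          2 * α * β * ((u' 0 * w 0 + u' 1 * w 1 + u' 2 * w 2) *
            (v 0 * y 0 + v 1 * y 1 + v 2 * y 2)) := by
        simp only [frobSq, hM, Matrix.of_apply, Fin.sum_univ_three, hBij, hp, hd, hny]
        ring
      rw [e, hB, hyv, mul_zero, mul_zero, add_zero, hα, hβ]
      field_simp
      linear_combination (-(sp^2)) * hs2 + (b^2*sp^2 - 3*d^2) * hsp2
    obtain ⟨z, hz0, hzv, hzy⟩ := exists_orth v y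
    have hMz : M *ᵥ z = 0 := by
      ext i
      simp only [hM, Matrix.mulVec, dotProduct, Fin.sum_univ_three,
        Matrix.of_apply, hBij, Pi.zero_apply]
      linear_combination (α * u' i) * hzv + (β * w i) * hzy
    have hMdet : M.det = 0 := Matrix.exists_mulVec_eq_zero_iff.mp ⟨z, hz0, hMz⟩
    have hipAM : (∑ i, ∑ j, A i j * M i j) = α * b + β * d := by
      simp only [hM, Matrix.of_apply, hb, hd, Fin.sum_univ_three]
      linear_combination (-(β * w 0)) * (hw 0) + (-(β * w 1)) * (hw 1) + (-(β * w 2)) * (hw 2)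
    have h1 : frobSq (A - B) = 6 - 2 * b := by
      rw [frob_sub_expand, hA, hB, ← hb]; ring
    have h2 : frobSq (A - M) = 6 - 2 * (α * b + β * d) := by
      rw [frob_sub_expand, hA, hM3, hipAM]; ring
    have hkey := hmin M hM3 hMdet
    rw [h1, h2] at hkey
    have hineq : α * b + β * d ≤ b := by linarith
    have hval : α * b + β * d = s / sp := by
      rw [hα, hβ]
      field_simp
      linear_combination (-1) * hs2 + (b^2) * hsp2
    have hgt : b < s / sp := by
      rw [lt_div_iff₀ hsppos]
      nlinarith [hs2, hsp2, hdpos, hspos, hsppos, sq_nonneg (s + b * sp)]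
    rw [hval] at hineq
    linarith
  omega
end

section
/- Let P = diag(1,1,0) and for a² + b² = 1 let P(t) = cos(t)·P + sin(t)·(a T₁ + b T₂), where T₁ = [[0,1,0],[1,0,0],[0,0,0]] and T₂ = [[1,0,0],[0,-1,0],[0,0,0]]. Then P(t) has rank 2 for 0 ≤ t < π/4, and P(π/4) has rank 1. -/
open Matrix

lemma aux_rank_le_of_factor {k : ℕ} (A : Matrix (Fin 3) (Fin 3) ℝ)
    (B : Matrix (Fin 3) (Fin k) ℝ) (C : Matrix (Fin k) (Fin 3) ℝ)
    (h : A = B * C) : A.rank ≤ k := by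
  calc A.rank = (B * C).rank := by rw [h]
    _ ≤ B.rank := rank_mul_le_left B C
    _ ≤ Fintype.card (Fin k) := rank_le_card_width B
    _ = k := Fintype.card_fin k

lemma aux_le_rank_of_unit {k : ℕ} (A : Matrix (Fin 3) (Fin 3) ℝ)
    (B : Matrix (Fin k) (Fin 3) ℝ) (C : Matrix (Fin 3) (Fin k) ℝ)
    (h : IsUnit (B * A * C)) : k ≤ A.rank := by
  have h1 : (B * A * C).rank = k := by
    rw [rank_of_isUnit _ h, Fintype.card_fin]
  calc k = (B * A * C).rank := h1.symm
    _ ≤ (B * A).rank := rank_mul_le_left _ _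
    _ ≤ A.rank := rank_mul_le_right _ _

lemma aux_fact1 (a b t : ℝ) :
    (Real.cos t • (!![1,0,0; 0,1,0; 0,0,0] : Matrix (Fin 3) (Fin 3) ℝ) +
        Real.sin t • (a • (!![0,1,0; 1,0,0; 0,0,0] : Matrix (Fin 3) (Fin 3) ℝ) +
          b • (!![1,0,0; 0,-1,0; 0,0,0] : Matrix (Fin 3) (Fin 3) ℝ)))
    = (!![(1:ℝ),0;0,1;0,0]) *
        (!![Real.cos t + b*Real.sin t, a*Real.sin t;
            a*Real.sin t, Real.cos t - b*Real.sin t]) * (!![(1:ℝ),0,0;0,1,0]) := by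
  ext i j
  fin_cases i <;> fin_cases j <;>
    simp [Matrix.mul_apply, Fin.sum_univ_succ, Matrix.vecHead, Matrix.vecTail] <;> ring

lemma aux_fact2 (a b t : ℝ) :
    !![(1:ℝ),0,0;0,1,0] *
      (Real.cos t • (!![1,0,0; 0,1,0; 0,0,0] : Matrix (Fin 3) (Fin 3) ℝ) +
        Real.sin t • (a • (!![0,1,0; 1,0,0; 0,0,0] : Matrix (Fin 3) (Fin 3) ℝ) +
          b • (!![1,0,0; 0,-1,0; 0,0,0] : Matrix (Fin 3) (Fin 3) ℝ))) * !![(1:ℝ),0;0,1;0,0]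
    = !![Real.cos t + b*Real.sin t, a*Real.sin t;
          a*Real.sin t, Real.cos t - b*Real.sin t] := by
  ext i j
  fin_cases i <;> fin_cases j <;>
    simp [Matrix.mul_apply, Fin.sum_univ_succ, Matrix.vecHead, Matrix.vecTail] <;> ring

/-- For P = diag(1,1,0), T₁ = [[0,1,0],[1,0,0],[0,0,0]], T₂ = [[1,0,0],[0,-1,0],[0,0,0]]
and a² + b² = 1, the matrix P(t) = cos t · P + sin t · (a T₁ + b T₂) has rank 2 for
0 ≤ t < π/4, and P(π/4) has rank 1. -/
theorem rank_along_normal_geodesic (a b : ℝ) (hab : a ^ 2 + b ^ 2 = 1) :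
    (∀ t : ℝ, 0 ≤ t → t < Real.pi / 4 →
      (Real.cos t • (!![1,0,0; 0,1,0; 0,0,0] : Matrix (Fin 3) (Fin 3) ℝ) +
        Real.sin t • (a • (!![0,1,0; 1,0,0; 0,0,0] : Matrix (Fin 3) (Fin 3) ℝ) +
          b • (!![1,0,0; 0,-1,0; 0,0,0] : Matrix (Fin 3) (Fin 3) ℝ))).rank = 2) ∧
    (Real.cos (Real.pi / 4) • (!![1,0,0; 0,1,0; 0,0,0] : Matrix (Fin 3) (Fin 3) ℝ) +
      Real.sin (Real.pi / 4) • (a • (!![0,1,0; 1,0,0; 0,0,0] : Matrix (Fin 3) (Fin 3) ℝ) +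
        b • (!![1,0,0; 0,-1,0; 0,0,0] : Matrix (Fin 3) (Fin 3) ℝ))).rank = 1 := by
  constructor
  · intro t ht0 ht1
    have hunit : IsUnit (!![Real.cos t + b*Real.sin t, a*Real.sin t;
            a*Real.sin t, Real.cos t - b*Real.sin t]) := by
      rw [Matrix.isUnit_iff_isUnit_det, isUnit_iff_ne_zero, Matrix.det_fin_two_of]
      have hdet : (Real.cos t + b*Real.sin t) * (Real.cos t - b*Real.sin t)
          - a*Real.sin t * (a*Real.sin t) = Real.cos (2*t) := by
        rw [Real.cos_two_mul]
        nlinarith [hab, Real.sin_sq_add_cos_sq t]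
      rw [hdet]
      have hpos : 0 < Real.cos (2*t) := by
        apply Real.cos_pos_of_mem_Ioo
        refine Set.mem_Ioo.mpr ⟨?_, ?_⟩
        · have := Real.pi_pos; linarith
        · linarith
      exact ne_of_gt hpos
    have hle := aux_rank_le_of_factor _
      (!![(1:ℝ),0;0,1;0,0] * !![Real.cos t + b*Real.sin t, a*Real.sin t;
            a*Real.sin t, Real.cos t - b*Real.sin t]) !![(1:ℝ),0,0;0,1,0] (aux_fact1 a b t)
    have hge := aux_le_rank_of_unit _ !![(1:ℝ),0,0;0,1,0] !![(1:ℝ),0;0,1;0,0]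
      ((aux_fact2 a b t) ▸ hunit)
    omega
  · by_cases hb : b = -1
    · have ha : a = 0 := by nlinarith [hab]
      have hle : (Real.cos (Real.pi / 4) • (!![1,0,0; 0,1,0; 0,0,0] : Matrix (Fin 3) (Fin 3) ℝ) +
          Real.sin (Real.pi / 4) • (a • (!![0,1,0; 1,0,0; 0,0,0] : Matrix (Fin 3) (Fin 3) ℝ) +
            b • (!![1,0,0; 0,-1,0; 0,0,0] : Matrix (Fin 3) (Fin 3) ℝ))).rank ≤ 1 := by
        apply aux_rank_le_of_factor _ !![(0:ℝ); Real.sqrt 2; 0] !![(0:ℝ),1,0]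
        ext i j
        fin_cases i <;> fin_cases j <;>
          simp [ha, hb, Real.cos_pi_div_four, Real.sin_pi_div_four, Matrix.mul_apply,
            Fin.sum_univ_succ, Matrix.vecHead, Matrix.vecTail] <;> ring
      have hge : 1 ≤ (Real.cos (Real.pi / 4) •
            (!![1,0,0; 0,1,0; 0,0,0] : Matrix (Fin 3) (Fin 3) ℝ) +
          Real.sin (Real.pi / 4) • (a • (!![0,1,0; 1,0,0; 0,0,0] : Matrix (Fin 3) (Fin 3) ℝ) +
            b • (!![1,0,0; 0,-1,0; 0,0,0] : Matrix (Fin 3) (Fin 3) ℝ))).rank := by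
        apply aux_le_rank_of_unit _ !![(0:ℝ),1,0] !![(0:ℝ);1;0]
        have key : !![(0:ℝ),1,0] *
            (Real.cos (Real.pi / 4) • (!![1,0,0; 0,1,0; 0,0,0] : Matrix (Fin 3) (Fin 3) ℝ) +
              Real.sin (Real.pi / 4) • (a • (!![0,1,0; 1,0,0; 0,0,0] : Matrix (Fin 3) (Fin 3) ℝ) +
                b • (!![1,0,0; 0,-1,0; 0,0,0] : Matrix (Fin 3) (Fin 3) ℝ))) * !![(0:ℝ);1;0]
            = !![Real.sqrt 2] := by
          ext i j
          fin_cases i <;> fin_cases j <;>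
            simp [ha, hb, Real.cos_pi_div_four, Real.sin_pi_div_four, Matrix.mul_apply,
              Fin.sum_univ_succ, Matrix.vecHead, Matrix.vecTail] <;> ring
        rw [key, Matrix.isUnit_iff_isUnit_det, Matrix.det_fin_one_of, isUnit_iff_ne_zero]
        positivity
      omega
    · have h1b : (1:ℝ) + b ≠ 0 := fun h => hb (by linarith)
      have hle : (Real.cos (Real.pi / 4) • (!![1,0,0; 0,1,0; 0,0,0] : Matrix (Fin 3) (Fin 3) ℝ) +
          Real.sin (Real.pi / 4) • (a • (!![0,1,0; 1,0,0; 0,0,0] : Matrix (Fin 3) (Fin 3) ℝ) +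
            b • (!![1,0,0; 0,-1,0; 0,0,0] : Matrix (Fin 3) (Fin 3) ℝ))).rank ≤ 1 := by
        apply aux_rank_le_of_factor _
          !![Real.sqrt 2/2*(1+b); Real.sqrt 2/2*a; 0] !![(1:ℝ), a/(1+b), 0]
        ext i j
        fin_cases i <;> fin_cases j <;>
          simp [Real.cos_pi_div_four, Real.sin_pi_div_four, Matrix.mul_apply,
            Fin.sum_univ_succ, Matrix.vecHead, Matrix.vecTail]
        all_goals field_simp
        all_goals
          first
            | linear_combination (Real.sqrt 2) * hab
            | linear_combination (-Real.sqrt 2) * hab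
            | linear_combination (2*Real.sqrt 2) * hab
            | linear_combination (-2*Real.sqrt 2) * hab
            | linear_combination (4*Real.sqrt 2) * hab
            | linear_combination (-4*Real.sqrt 2) * hab
            | linear_combination (Real.sqrt 2*(1+b)) * hab
            | linear_combination (-(Real.sqrt 2*(1+b))) * hab
            | linear_combination (2*Real.sqrt 2*(1+b)) * hab
            | linear_combination (-(2*Real.sqrt 2*(1+b))) * hab
            | linear_combination (-1 : ℝ) * hab
            | ring
      have hge : 1 ≤ (Real.cos (Real.pi / 4) •
            (!![1,0,0; 0,1,0; 0,0,0] : Matrix (Fin 3) (Fin 3) ℝ) +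
          Real.sin (Real.pi / 4) • (a • (!![0,1,0; 1,0,0; 0,0,0] : Matrix (Fin 3) (Fin 3) ℝ) +
            b • (!![1,0,0; 0,-1,0; 0,0,0] : Matrix (Fin 3) (Fin 3) ℝ))).rank := by
        apply aux_le_rank_of_unit _ !![(1:ℝ),0,0] !![(1:ℝ);0;0]
        have key : !![(1:ℝ),0,0] *
            (Real.cos (Real.pi / 4) • (!![1,0,0; 0,1,0; 0,0,0] : Matrix (Fin 3) (Fin 3) ℝ) +
              Real.sin (Real.pi / 4) • (a • (!![0,1,0; 1,0,0; 0,0,0] : Matrix (Fin 3) (Fin 3) ℝ) +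
                b • (!![1,0,0; 0,-1,0; 0,0,0] : Matrix (Fin 3) (Fin 3) ℝ))) * !![(1:ℝ);0;0]
            = !![Real.sqrt 2/2*(1+b)] := by
          ext i j
          fin_cases i <;> fin_cases j <;>
            simp [Real.cos_pi_div_four, Real.sin_pi_div_four, Matrix.mul_apply,
              Fin.sum_univ_succ, Matrix.vecHead, Matrix.vecTail] <;> ring
        rw [key, Matrix.isUnit_iff_isUnit_det, Matrix.det_fin_one_of, isUnit_iff_ne_zero]
        have : (0:ℝ) < Real.sqrt 2 / 2 := by positivity
        exact mul_ne_zero (ne_of_gt this) h1b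
      omega
end

section
/- Eckart–Young theorem (spectral norm/Frobenius case, Frobenius norm version): Let A be an n×k real matrix with SVD A = W D V⁻¹, D = diag(d₁ ≥ d₂ ≥ ... ≥ d_r > 0, 0, ..., 0), and let r' < r. Then A' = W D' V⁻¹ with D' = diag(d₁,...,d_{r'},0,...,0) satisfies ‖A - A'‖ ≤ ‖A - B‖ in Frobenius norm for every n×k matrix B of rank at most r'. -/
open Matrix
open Finset

lemma frobSq_eq_trace {n k : ℕ} (M : Matrix (Fin n) (Fin k) ℝ) :
    frobSq M = (Mᵀ * M).trace := by
  simp only [frobSq, Matrix.trace, Matrix.diag, Matrix.mul_apply, Matrix.transpose_apply, pow_two]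
  exact Finset.sum_comm

lemma frobSq_conj {n k : ℕ} (W : Matrix (Fin n) (Fin n) ℝ) (V : Matrix (Fin k) (Fin k) ℝ)
    (hW : Wᵀ * W = 1) (hV : Vᵀ * V = 1) (M : Matrix (Fin n) (Fin k) ℝ) :
    frobSq (W * M * Vᵀ) = frobSq M := by
  rw [frobSq_eq_trace, frobSq_eq_trace]
  have h1 : (W * M * Vᵀ)ᵀ * (W * M * Vᵀ) = V * ((Mᵀ * M) * Vᵀ) := by
    rw [Matrix.transpose_mul, Matrix.transpose_mul, Matrix.transpose_transpose]
    calc V * (Mᵀ * Wᵀ) * (W * M * Vᵀ) = V * (Mᵀ * ((Wᵀ * W) * M) * Vᵀ) := by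
          simp only [Matrix.mul_assoc]
      _ = V * ((Mᵀ * M) * Vᵀ) := by rw [hW, Matrix.one_mul]
  rw [h1, Matrix.trace_mul_comm, Matrix.mul_assoc, Matrix.trace_mul_comm, hV, Matrix.one_mul]

lemma arith_key (c t : ℕ → ℝ) (k r' : ℕ) (hr : r' ≤ k)
    (hc0 : ∀ i, 0 ≤ c i) (hcmono : ∀ i j, i ≤ j → c j ≤ c i)
    (ht0 : ∀ i, 0 ≤ t i) (ht1 : ∀ i, t i ≤ 1)
    (hsum : (k : ℝ) - r' ≤ ∑ i ∈ range k, t i) :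
    (∑ i ∈ range k, if r' ≤ i then c i else 0) ≤ ∑ i ∈ range k, c i * t i := by
  have hsplit : ∀ f : ℕ → ℝ, (∑ i ∈ range k, f i)
      = (∑ i ∈ range r', f i) + ∑ i ∈ Ico r' k, f i := by
    intro f; rw [Finset.sum_range_add_sum_Ico f hr]
  rw [hsplit, hsplit (fun i => c i * t i)]
  have h0 : (∑ i ∈ range r', if r' ≤ i then c i else 0) = 0 :=
    Finset.sum_eq_zero fun i hi => if_neg (by simp at hi; omega)
  have h1 : (∑ i ∈ Ico r' k, if r' ≤ i then c i else 0) = ∑ i ∈ Ico r' k, c i :=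
    Finset.sum_congr rfl fun i hi => if_pos (by simp at hi; omega)
  rw [h0, h1, zero_add]
  -- main chain
  have step1 : ∑ i ∈ Ico r' k, c i * (1 - t i) ≤ c r' * ∑ i ∈ Ico r' k, (1 - t i) := by
    rw [Finset.mul_sum]
    refine Finset.sum_le_sum fun i hi => ?_
    have hi' : r' ≤ i := (Finset.mem_Ico.mp hi).1
    have := hcmono r' i hi'
    nlinarith [ht1 i]
  have step2 : ∑ i ∈ Ico r' k, (1 - t i) ≤ ∑ i ∈ range r', t i := by
    have hcard : ∑ i ∈ Ico r' k, (1 : ℝ) = (k : ℝ) - r' := by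
      rw [Finset.sum_const, Nat.card_Ico, nsmul_eq_mul, mul_one, Nat.cast_sub hr]
    have := hsum
    rw [hsplit t] at this
    rw [Finset.sum_sub_distrib, hcard]
    linarith
  have step3 : c r' * ∑ i ∈ range r', t i ≤ ∑ i ∈ range r', c i * t i := by
    rw [Finset.mul_sum]
    refine Finset.sum_le_sum fun i hi => ?_
    have : c r' ≤ c i := hcmono i r' (by simp at hi; omega)
    nlinarith [ht0 i]
  have : ∑ i ∈ Ico r' k, c i - ∑ i ∈ Ico r' k, c i * t i = ∑ i ∈ Ico r' k, c i * (1 - t i) := by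
    rw [← Finset.sum_sub_distrib]; apply Finset.sum_congr rfl; intros; ring
  have step2' := mul_le_mul_of_nonneg_left step2 (hc0 r')
  linarith


lemma key_lower {n k : ℕ} (D C : Matrix (Fin n) (Fin k) ℝ) (d : ℕ → ℝ) (r' : ℕ)
    (hD : ∀ (i : Fin n) (j : Fin k), D i j = if (i : ℕ) = (j : ℕ) then d i else 0)
    (hmono : ∀ i j : ℕ, i ≤ j → d j ≤ d i) (hd0 : ∀ i, 0 ≤ d i)
    (hdn : ∀ i, n ≤ i → d i = 0)
    (hr : r' ≤ k) (hC : C.rank ≤ r') :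
    (∑ i ∈ range k, if r' ≤ i then d i ^ 2 else 0) ≤ frobSq (D - C) := by
  classical
  set S : Submodule ℝ (EuclideanSpace ℝ (Fin k)) := LinearMap.ker (C.mulVecLin ∘ₗ (WithLp.linearEquiv 2 ℝ (Fin k → ℝ)).toLinearMap) with hS
  set m := Module.finrank ℝ S with hmdef
  have hm : k ≤ m + r' := by
    have h1 := LinearMap.finrank_range_add_finrank_ker
      (C.mulVecLin ∘ₗ (WithLp.linearEquiv 2 ℝ (Fin k → ℝ)).toLinearMap)
    rw [finrank_euclideanSpace_fin] at h1
    have h2 : m = Module.finrank ℝ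
      (LinearMap.ker (C.mulVecLin ∘ₗ (WithLp.linearEquiv 2 ℝ (Fin k → ℝ)).toLinearMap)) := rfl
    have h3 : C.rank = Module.finrank ℝ
      (LinearMap.range (C.mulVecLin ∘ₗ (WithLp.linearEquiv 2 ℝ (Fin k → ℝ)).toLinearMap)) := by
      rw [LinearMap.range_comp_of_range_eq_top _ (LinearEquiv.range _)]; rfl
    omega
  set b := stdOrthonormalBasis ℝ S with hb
  set v : Fin m → EuclideanSpace ℝ (Fin k) := fun j => (b j : EuclideanSpace ℝ (Fin k)) with hvdef
  have hv : Orthonormal ℝ v := by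
    rw [orthonormal_iff_ite]
    intro i j
    rw [show (inner ℝ (v i) (v j) : ℝ) = inner ℝ (b i) (b j) from
      (Submodule.coe_inner S (b i) (b j)).symm]
    exact orthonormal_iff_ite.mp b.orthonormal i j
  have hker : ∀ j, C.mulVec (v j) = 0 := by
    intro j
    exact LinearMap.mem_ker.mp (b j).2
  set M := D - C with hM
  have row : ∀ i : Fin n, (∑ j : Fin m, (M.mulVec (v j) i)^2) ≤ ∑ l : Fin k, (M i l)^2 := by
    intro i
    set x : EuclideanSpace ℝ (Fin k) := WithLp.toLp 2 (fun l => M i l) with hxdef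
    have hb2 := hv.sum_inner_products_le (s := Finset.univ) x
    have hx : ‖x‖^2 = ∑ l : Fin k, (M i l)^2 := by
      rw [← real_inner_self_eq_norm_sq]
      rw [PiLp.inner_apply]; simp [hxdef, RCLike.inner_apply, pow_two]
    rw [hx] at hb2
    refine le_trans (le_of_eq ?_) hb2
    refine Finset.sum_congr rfl fun j _ => ?_
    have h2 : (inner ℝ (v j) x : ℝ) = M.mulVec (v j) i := by
      simp [hxdef, PiLp.inner_apply, RCLike.inner_apply, Matrix.mulVec, dotProduct,
        mul_comm]
    rw [h2, Real.norm_eq_abs, sq_abs]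
  have big : ∑ j : Fin m, ∑ i : Fin n, (M.mulVec (v j) i)^2 ≤ frobSq M := by
    rw [Finset.sum_comm]
    exact Finset.sum_le_sum fun i _ => row i
  have hMd : ∀ j, M.mulVec (v j) = D.mulVec (v j) := by
    intro j; rw [hM, Matrix.sub_mulVec, hker, sub_zero]
  set Wf : Fin m → ℕ → ℝ := fun j i => if h : i < k then v j ⟨i, h⟩ else 0 with hWf
  have hDmul : ∀ (j : Fin m) (i : Fin n), D.mulVec (v j) i = d i * Wf j i := by
    intro j i
    simp only [Matrix.mulVec, dotProduct]
    by_cases h : (i : ℕ) < k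
    · rw [show Wf j (i : ℕ) = v j ⟨i, h⟩ from dif_pos h]
      rw [Finset.sum_eq_single (⟨(i : ℕ), h⟩ : Fin k)]
      · rw [hD]; simp
      · intro l _ hl
        rw [hD, if_neg (fun hh => hl (Fin.ext hh.symm)), zero_mul]
      · intro h'; exact absurd (Finset.mem_univ _) h'
    · rw [show Wf j (i : ℕ) = 0 from dif_neg h, mul_zero]
      refine Finset.sum_eq_zero fun l _ => ?_
      rw [hD, if_neg (fun hh => h (by rw [hh]; exact l.isLt)), zero_mul]
  set t : ℕ → ℝ := fun i => ∑ j : Fin m, (Wf j i)^2 with ht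
  have hsumjn : ∀ j : Fin m,
      ∑ i : Fin n, (D.mulVec (v j) i)^2 = ∑ i ∈ range n, (d i * Wf j i)^2 := by
    intro j
    rw [← Fin.sum_univ_eq_sum_range (fun i => (d i * Wf j i)^2) n]
    exact Finset.sum_congr rfl fun i _ => by rw [hDmul]
  have htotal : ∑ j : Fin m, ∑ i ∈ range n, (d i * Wf j i)^2
      = ∑ i ∈ range n, d i^2 * t i := by
    rw [Finset.sum_comm]
    refine Finset.sum_congr rfl fun i _ => ?_
    rw [ht, Finset.mul_sum]
    exact Finset.sum_congr rfl fun j _ => by ring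
  have htW0 : ∀ i, k ≤ i → t i = 0 := by
    intro i hi
    rw [ht]
    refine Finset.sum_eq_zero fun j _ => ?_
    rw [show Wf j i = 0 from dif_neg (by omega)]
    norm_num
  have hFk : ∑ i ∈ range n, d i^2 * t i = ∑ i ∈ range k, d i^2 * t i := by
    rcases le_total n k with h | h
    · refine Finset.sum_subset (Finset.range_subset_range.mpr h) fun x hx hnx => ?_
      rw [hdn x (by simp at hnx; omega)]; ring
    · refine (Finset.sum_subset (Finset.range_subset_range.mpr h) fun x hx hnx => ?_).symm
      rw [htW0 x (by simp at hnx; omega)]; ring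
  have ht0 : ∀ i, 0 ≤ t i := fun i => Finset.sum_nonneg fun j _ => sq_nonneg _
  have ht1 : ∀ i, t i ≤ 1 := by
    intro i
    by_cases h : i < k
    · have hb2 := hv.sum_inner_products_le (s := Finset.univ)
        (EuclideanSpace.single (⟨i, h⟩ : Fin k) (1 : ℝ))
      rw [EuclideanSpace.norm_single] at hb2
      norm_num at hb2
      refine le_trans (le_of_eq ?_) hb2
      rw [ht]
      exact Finset.sum_congr rfl fun j _ => by
        rw [show Wf j i = v j ⟨i, h⟩ from dif_pos h]
        simp [EuclideanSpace.inner_single_right]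
    · rw [htW0 i (by omega)]; norm_num
  have hvnorm : ∀ j : Fin m, ∑ i : Fin k, (v j i)^2 = 1 := by
    intro j
    have h1 : (inner ℝ (v j) (v j) : ℝ) = 1 := by
      rw [real_inner_self_eq_norm_sq, hv.1 j]; norm_num
    rw [← h1]
    rw [PiLp.inner_apply]; simp [RCLike.inner_apply, pow_two]
  have htsum : (k : ℝ) - r' ≤ ∑ i ∈ range k, t i := by
    have h1 : ∑ i ∈ range k, t i = (m : ℝ) := by
      rw [← Fin.sum_univ_eq_sum_range t k]
      have h2 : ∀ i : Fin k, t (i : ℕ) = ∑ j : Fin m, (v j i)^2 := by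
        intro i
        rw [ht]
        refine Finset.sum_congr rfl fun j _ => ?_
        rw [show Wf j (i : ℕ) = v j ⟨(i : ℕ), i.isLt⟩ from dif_pos i.isLt, Fin.eta]
      rw [Finset.sum_congr rfl fun i _ => h2 i, Finset.sum_comm]
      rw [Finset.sum_congr rfl fun j _ => hvnorm j]
      simp
    rw [h1]
    have : (k : ℝ) ≤ (m : ℝ) + (r' : ℝ) := by exact_mod_cast hm
    linarith
  calc (∑ i ∈ range k, if r' ≤ i then d i ^ 2 else 0)
      ≤ ∑ i ∈ range k, d i^2 * t i :=
        arith_key (fun i => d i^2) t k r' hr (fun i => sq_nonneg _)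
          (fun i j hij => pow_le_pow_left₀ (hd0 j) (hmono i j hij) 2) ht0 ht1 htsum
    _ = ∑ i ∈ range n, d i^2 * t i := hFk.symm
    _ = ∑ j : Fin m, ∑ i ∈ range n, (d i * Wf j i)^2 := htotal.symm
    _ = ∑ j : Fin m, ∑ i : Fin n, (M.mulVec (v j) i)^2 := by
        refine Finset.sum_congr rfl fun j _ => ?_
        rw [Finset.sum_congr rfl fun i (_ : i ∈ Finset.univ) => by rw [hMd j], hsumjn j]
    _ ≤ frobSq M := big


/-- Eckart–Young theorem (Frobenius norm version): if A = W D V⁻¹ is an SVD of an n×k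
real matrix of rank r, with singular values d₁ ≥ d₂ ≥ ⋯ ≥ d_r > 0 (and dᵢ = 0 for i ≥ r),
and r' < r, then truncating to the first r' singular values gives the best Frobenius-norm
approximation of rank ≤ r': ‖A - W D' V⁻¹‖ ≤ ‖A - B‖ for every n×k matrix B of
rank at most r'. -/
theorem eckart_young_frobenius {n k : ℕ}
    (A D D' : Matrix (Fin n) (Fin k) ℝ)
    (W : Matrix (Fin n) (Fin n) ℝ) (V : Matrix (Fin k) (Fin k) ℝ)
    (d : ℕ → ℝ) (r' : ℕ)
    (hW : Wᵀ * W = 1) (hV : Vᵀ * V = 1)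
    (hD : ∀ (i : Fin n) (j : Fin k), D i j = if (i : ℕ) = (j : ℕ) then d i else 0)
    (hmono : ∀ i j : ℕ, i ≤ j → d j ≤ d i)
    (hpos : ∀ i : ℕ, i < A.rank → 0 < d i)
    (hzero : ∀ i : ℕ, A.rank ≤ i → d i = 0)
    (hA : A = W * D * Vᵀ)
    (hr' : r' < A.rank)
    (hD' : ∀ (i : Fin n) (j : Fin k),
      D' i j = if (i : ℕ) = (j : ℕ) ∧ (i : ℕ) < r' then d i else 0) :
    ∀ B : Matrix (Fin n) (Fin k) ℝ, B.rank ≤ r' →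
      frobSq (A - W * D' * Vᵀ) ≤ frobSq (A - B) := by
  intro B hB
  have hd0 : ∀ i, 0 ≤ d i := by
    intro i
    rcases lt_or_ge i A.rank with h | h
    · exact le_of_lt (hpos i h)
    · exact le_of_eq (hzero i h).symm
  have hrankn : A.rank ≤ n := le_trans A.rank_le_card_height (by simp)
  have hrankk : A.rank ≤ k := le_trans A.rank_le_card_width (by simp)
  have hdn : ∀ i, n ≤ i → d i = 0 := fun i hi => hzero i (by omega)
  have hrk : r' ≤ k := by omega
  have hWW : W * Wᵀ = 1 := mul_eq_one_comm.mp hW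
  have hVV : V * Vᵀ = 1 := mul_eq_one_comm.mp hV
  -- left side
  have hleft : A - W * D' * Vᵀ = W * (D - D') * Vᵀ := by
    rw [hA, Matrix.mul_sub, Matrix.sub_mul]
  have hleftval : frobSq (A - W * D' * Vᵀ)
      ≤ ∑ i ∈ Finset.range k, if r' ≤ i then d i ^ 2 else 0 := by
    rw [hleft, frobSq_conj W V hW hV]
    have hinner : ∀ i : Fin n, (∑ j : Fin k, ((D - D') i j)^2)
        = if (i : ℕ) < k ∧ r' ≤ (i : ℕ) then d i ^ 2 else 0 := by
      intro i
      have hE : ∀ j : Fin k, (D - D') i j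
          = if (i : ℕ) = (j : ℕ) ∧ r' ≤ (i : ℕ) then d (i : ℕ) else 0 := by
        intro j
        rw [Matrix.sub_apply, hD, hD']
        by_cases h1 : (i : ℕ) = (j : ℕ)
        · by_cases h2 : (i : ℕ) < r'
          · rw [if_pos h1, if_pos ⟨h1, h2⟩, if_neg (by omega), sub_self]
          · rw [if_pos h1, if_neg (by tauto), sub_zero, if_pos ⟨h1, by omega⟩]
        · rw [if_neg h1, if_neg (by tauto), if_neg (by tauto), sub_zero]
      by_cases h : (i : ℕ) < k
      · rw [Finset.sum_eq_single (⟨(i : ℕ), h⟩ : Fin k)]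
        · rw [hE]
          by_cases h2 : r' ≤ (i : ℕ) <;> simp [h, h2]
        · intro l _ hl
          rw [hE, if_neg (fun hh => hl (Fin.ext hh.1.symm))]
          norm_num
        · intro h'; exact absurd (Finset.mem_univ _) h'
      · rw [if_neg (fun hh => h hh.1)]
        refine Finset.sum_eq_zero fun l _ => ?_
        rw [hE, if_neg (fun hh => h (by rw [hh.1]; exact l.isLt))]
        norm_num
    have h1 : frobSq (D - D')
        = ∑ i ∈ Finset.range n, (if i < k ∧ r' ≤ i then d i ^ 2 else 0) := by
      rw [frobSq, ← Fin.sum_univ_eq_sum_range (fun i => if i < k ∧ r' ≤ i then d i ^ 2 else 0) n]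
      exact Finset.sum_congr rfl fun i _ => hinner i
    rw [h1]
    -- compare with range k sum
    have hmin : Finset.range (min n k) ⊆ Finset.range n := Finset.range_subset_range.mpr (min_le_left _ _)
    have e1 : ∑ i ∈ Finset.range n, (if i < k ∧ r' ≤ i then d i ^ 2 else 0)
        = ∑ i ∈ Finset.range (min n k), (if i < k ∧ r' ≤ i then d i ^ 2 else 0) := by
      refine (Finset.sum_subset hmin fun x hx hnx => ?_).symm
      rw [if_neg (by simp at hx hnx; omega)]
    rw [e1]
    calc ∑ i ∈ Finset.range (min n k), (if i < k ∧ r' ≤ i then d i ^ 2 else 0)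
        ≤ ∑ i ∈ Finset.range (min n k), (if r' ≤ i then d i ^ 2 else 0) := by
          refine Finset.sum_le_sum fun i _ => ?_
          by_cases h1 : i < k ∧ r' ≤ i
          · rw [if_pos h1, if_pos h1.2]
          · rw [if_neg h1]
            split_ifs <;> positivity
      _ ≤ ∑ i ∈ Finset.range k, (if r' ≤ i then d i ^ 2 else 0) := by
          refine Finset.sum_le_sum_of_subset_of_nonneg
            (Finset.range_subset_range.mpr (min_le_right _ _)) fun i _ _ => ?_
          split_ifs <;> positivity
  -- right side
  set C := Wᵀ * B * V with hC
  have hCrank : C.rank ≤ r' := by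
    calc C.rank ≤ (Wᵀ * B).rank := Matrix.rank_mul_le_left _ _
      _ ≤ B.rank := Matrix.rank_mul_le_right _ _
      _ ≤ r' := hB
  have hright : A - B = W * (D - C) * Vᵀ := by
    rw [hA, Matrix.mul_sub, Matrix.sub_mul, hC]
    congr 1
    symm
    calc W * (Wᵀ * B * V) * Vᵀ = W * Wᵀ * B * (V * Vᵀ) := by
          simp only [Matrix.mul_assoc]
      _ = B := by rw [hWW, hVV, Matrix.one_mul, Matrix.mul_one]
  calc frobSq (A - W * D' * Vᵀ)
      ≤ ∑ i ∈ Finset.range k, if r' ≤ i then d i ^ 2 else 0 := hleftval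
    _ ≤ frobSq (D - C) := key_lower D C d r' hD hmono hd0 hdn hrk hCrank
    _ = frobSq (A - B) := by rw [hright]; exact (frobSq_conj W V hW hV _).symm
end
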